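/- Under the identification of $\mathfrak{o}_N$ with the exterior square $\Lambda^2\mathbb{C}^N$ given by $F_{ij} \mapsto e_i \wedge e_{-j}$ (where the symmetric form is $G = (\delta_{i,-j})$), the linear map sending the polyvector $e_{-i_1}\wedge\cdots\wedge e_{-i_k}$ (for $I = \{i_1 < \cdots < i_k\}$) to the pfaffian $\mathrm{Pf}\,F_I \in U(\mathfrak{o}_N)$ intertwines the adjoint action of $\mathfrak{o}_N$ on $\Lambda^k\mathbb{C}^N$ with the adjoint action of $\mathfrak{o}_N$ on $U(\mathfrak{o}_N)$: for every $g \in \mathfrak{o}_N$, $[g, \mathrm{Pf}\,F_I]$ equals the image of $g\cdot(e_{-i_1}\wedge\cdots\wedge e_{-i_k})$. -/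

import Mathlib

open scoped BigOperators

/-- Index set `{-n, …, n}` for the split orthogonal Lie algebra `o_{2n+1}`. -/
abbrev Idx (n : ℕ) : Type := {i : ℤ // i ∈ Finset.Icc (-(n : ℤ)) (n : ℤ)}

namespace Idx
/-- Negation on the index set. -/
def neg {n : ℕ} (i : Idx n) : Idx n :=
  ⟨-i.1, by have := i.2; simp only [Finset.mem_Icc] at *; omega⟩
end Idx

/-- Noncommutative pfaffian of `F` along an enumeration `e : Fin (2m) → Idx n`:
`Pf = 1/(m! 2^m) ∑_σ sgn σ · F_{-e(σ 1), e(σ 2)} ⋯ F_{-e(σ(2m-1)), e(σ(2m))}`. -/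
noncomputable def PfEnum {A : Type*} [Ring A] [Algebra ℚ A] {n : ℕ}
    (F : Idx n → Idx n → A) (m : ℕ) (e : Fin (2 * m) → Idx n) : A :=
  ((m.factorial : ℚ) * 2 ^ m)⁻¹ •
    ∑ σ : Equiv.Perm (Fin (2 * m)),
      (Equiv.Perm.sign σ : ℤ) •
        (List.ofFn fun t : Fin m =>
          F (Idx.neg (e (σ ⟨2 * t.1, by have := t.2; omega⟩)))
            (e (σ ⟨2 * t.1 + 1, by have := t.2; omega⟩))).prod

/-- Noncommutative pfaffian `Pf F_I` of an (even-cardinality) indexing set `I`,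
using the increasing enumeration of `I`. -/
noncomputable def PfSet {A : Type*} [Ring A] [Algebra ℚ A] {n : ℕ}
    (F : Idx n → Idx n → A) (I : Finset (Idx n)) : A :=
  PfEnum F (I.card / 2) fun t =>
    (I.orderIsoOfFin rfl ⟨t.1, by have := t.2; omega⟩).1

/-- The defining commutation relations of the generators `F_{ij}` of `o_N`. -/
def OrthRel {A : Type*} [Ring A] {n : ℕ} (F : Idx n → Idx n → A) : Prop :=
  ∀ i j k l : Idx n,
    F i j * F k l - F k l * F i j =
      (if k = j then F i l else 0) - (if i = l then F k j else 0)
        - (if Idx.neg k = i then F (Idx.neg j) l else 0)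
        + (if Idx.neg l = j then F k (Idx.neg i) else 0)

/-- The skew-symmetry `F_{ij} = -F_{-j,-i}` of the generators. -/
def OrthSkew {A : Type*} [Ring A] {n : ℕ} (F : Idx n → Idx n → A) : Prop :=
  ∀ i j : Idx n, F i j = - F (Idx.neg j) (Idx.neg i)

/-- Sign of an arrangement (list) of elements of a linearly ordered type:
`(-1)^(number of inversions)`. -/
def arrSign {ι : Type*} [LinearOrder ι] (l : List ι) : ℤ :=
  (-1) ^ (((Finset.univ : Finset (Fin l.length × Fin l.length)).filter
      fun p => p.1 < p.2 ∧ l.get p.2 < l.get p.1).card)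

/-- Shuffle sign `(-1)^{(I'I'')}` of the permutation placing `I'` (in natural order)
before `I''` (in natural order). -/
def shuffleSign {ι : Type*} [LinearOrder ι] (I' I'' : Finset ι) : ℤ :=
  arrSign (I'.sort (· ≤ ·) ++ I''.sort (· ≤ ·))


namespace Idx
@[simp] lemma neg_neg' {n : ℕ} (i : Idx n) : neg (neg i) = i := by
  apply Subtype.ext; simp [neg]
@[simp] lemma neg_inj' {n : ℕ} (i j : Idx n) : neg i = neg j ↔ i = j := by
  constructor
  · intro h; have := congrArg neg h; simpa using this
  · rintro rfl; rfl
end Idx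

def Pprod {A : Type*} [Ring A] {n : ℕ} (F : Idx n → Idx n → A) (m : ℕ)
    (e : Fin (2 * m) → Idx n) (σ : Equiv.Perm (Fin (2 * m))) : A :=
  (List.ofFn fun t : Fin m =>
    F (Idx.neg (e (σ ⟨2 * t.1, by have := t.2; omega⟩)))
      (e (σ ⟨2 * t.1 + 1, by have := t.2; omega⟩))).prod

section helpers
variable {A : Type*} [Ring A]

lemma succ_comp_update {M : Type*} {k : ℕ} (f : Fin (k+1) → M) (s : Fin k) (x : M) :
    (fun i : Fin k => Function.update f s.succ x i.succ)
      = Function.update (fun i : Fin k => f i.succ) s x := by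
  funext i
  by_cases hi : i = s
  · subst hi; simp
  · rw [Function.update_of_ne (fun h => hi (Fin.succ_injective _ h)),
      Function.update_of_ne hi]

lemma ofFn_update_prod {M : Type*} [Monoid M] : ∀ (m : ℕ) (f : Fin m → M) (t : Fin m) (x : M),
    (List.ofFn (Function.update f t x)).prod =
      ((List.ofFn f).take t).prod * x * ((List.ofFn f).drop (t+1)).prod := by
  intro m
  induction m with
  | zero => intro f t x; exact absurd t.2 (by omega)
  | succ k ih =>
    intro f t x
    rcases Fin.eq_zero_or_eq_succ t with rfl | ⟨s, rfl⟩
    · simp [List.ofFn_succ, Function.update_of_ne (Fin.succ_ne_zero _)]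
    · rw [List.ofFn_succ, List.ofFn_succ (f := f), succ_comp_update,
        Function.update_of_ne (Fin.succ_ne_zero _).symm]
      simp only [Fin.val_succ, List.take_succ_cons, List.drop_succ_cons, List.prod_cons]
      rw [ih]
      simp [mul_assoc]

lemma comm_ofFn_prod (g : A) : ∀ (m : ℕ) (f : Fin m → A),
    g * (List.ofFn f).prod - (List.ofFn f).prod * g
      = ∑ t : Fin m, (List.ofFn (Function.update f t (g * f t - f t * g))).prod := by
  intro m
  induction m with
  | zero => intro f; simp
  | succ k ih =>
    intro f
    rw [Fin.sum_univ_succ]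
    have h0 : (List.ofFn (Function.update f 0 (g * f 0 - f 0 * g))).prod
        = (g * f 0 - f 0 * g) * (List.ofFn fun i : Fin k => f i.succ).prod := by
      rw [List.ofFn_succ]; simp [Function.update_of_ne (Fin.succ_ne_zero _)]
    have hs : ∀ s : Fin k, (List.ofFn (Function.update f s.succ (g * f s.succ - f s.succ * g))).prod
        = f 0 * (List.ofFn (Function.update (fun i : Fin k => f i.succ) s
            (g * f s.succ - f s.succ * g))).prod := by
      intro s
      rw [List.ofFn_succ, Function.update_of_ne (Fin.succ_ne_zero _).symm, List.prod_cons,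
        succ_comp_update]
    rw [h0]
    simp only [hs]
    rw [← Finset.mul_sum, ← ih]
    rw [List.ofFn_succ, List.prod_cons]
    noncomm_ring

lemma sum_range_two_mul {M : Type*} [AddCommMonoid M] (m : ℕ) (h : ℕ → M) :
    ∑ i ∈ Finset.range (2*m), h i = ∑ t ∈ Finset.range m, (h (2*t) + h (2*t+1)) := by
  induction m with
  | zero => simp
  | succ k ih =>
    have : 2 * (k+1) = (2*k + 1) + 1 := by ring
    rw [this, Finset.sum_range_succ, Finset.sum_range_succ, ih, Finset.sum_range_succ]
    abel

lemma sum_fin_two_mul {M : Type*} [AddCommMonoid M] (m : ℕ) (h : Fin (2*m) → M) :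
    ∑ s : Fin (2*m), h s
      = ∑ t : Fin m, (h ⟨2*t.1, by omega⟩ + h ⟨2*t.1+1, by omega⟩) := by
  set h' : ℕ → M := fun i => if hi : i < 2*m then h ⟨i, hi⟩ else 0 with hh'
  have e1 : ∑ s : Fin (2*m), h s = ∑ i ∈ Finset.range (2*m), h' i := by
    rw [← Fin.sum_univ_eq_sum_range]
    apply Finset.sum_congr rfl
    intro s _
    simp only [hh']
    rw [dif_pos s.2]
  rw [e1, sum_range_two_mul, ← Fin.sum_univ_eq_sum_range
    (fun t => h' (2*t) + h' (2*t+1)) m]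
  apply Finset.sum_congr rfl
  intro t _
  have h1 : (2*t.1 : ℕ) < 2*m := by omega
  have h2 : (2*t.1+1 : ℕ) < 2*m := by omega
  simp only [hh', dif_pos h1, dif_pos h2]

end helpers

lemma keyK {A : Type*} [Ring A] {n : ℕ} (F : Idx n → Idx n → A) (hrel : OrthRel F)
    (m : ℕ) (e : Fin (2 * m) → Idx n) (j1 j2 : Idx n) (σ : Equiv.Perm (Fin (2 * m))) :
    F j1 (Idx.neg j2) * Pprod F m e σ - Pprod F m e σ * F j1 (Idx.neg j2)
      = ∑ t : Fin (2 * m),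
          ((if e t = j2 then (1 : ℤ) else 0) • Pprod F m (Function.update e t (Idx.neg j1)) σ
            - (if e t = j1 then (1 : ℤ) else 0) • Pprod F m (Function.update e t (Idx.neg j2)) σ) := by
  set g := F j1 (Idx.neg j2) with hg
  set h : Fin (2*m) → A := fun t =>
    (if e t = j2 then (1 : ℤ) else 0) • Pprod F m (Function.update e t (Idx.neg j1)) σ
      - (if e t = j1 then (1 : ℤ) else 0) • Pprod F m (Function.update e t (Idx.neg j2)) σ with hh
  show g * Pprod F m e σ - Pprod F m e σ * g = ∑ t, h t
  rw [← Equiv.sum_comp σ h, sum_fin_two_mul m (fun s => h (σ s))]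
  set f : Fin m → A := fun t =>
    F (Idx.neg (e (σ ⟨2 * t.1, by have := t.2; omega⟩)))
      (e (σ ⟨2 * t.1 + 1, by have := t.2; omega⟩)) with hf
  have : Pprod F m e σ = (List.ofFn f).prod := rfl
  rw [this, comm_ofFn_prod]
  apply Finset.sum_congr rfl
  intro t _
  -- positions
  have htm : 2 * t.1 < 2 * m := by have := t.2; omega
  have htm1 : 2 * t.1 + 1 < 2 * m := by have := t.2; omega
  set ev : Fin (2*m) := ⟨2*t.1, htm⟩ with hev
  set od : Fin (2*m) := ⟨2*t.1+1, htm1⟩ with hod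
  -- update-at-ev description
  have hupd_ev : ∀ v : Idx n, Pprod F m (Function.update e (σ ev) v) σ
      = (List.ofFn (Function.update f t (F (Idx.neg v) (e (σ od))))).prod := by
    intro v
    unfold Pprod
    refine congrArg List.prod (congrArg List.ofFn (funext fun s => ?_))
    by_cases hs : s = t
    · subst hs
      have h1 : σ (⟨2 * s.1, by have := s.2; omega⟩ : Fin (2*m)) = σ ev := rfl
      have h2 : σ (⟨2 * s.1 + 1, by have := s.2; omega⟩ : Fin (2*m)) ≠ σ ev := fun hcon => by
        have hv : 2 * s.1 + 1 = 2 * s.1 := congrArg Fin.val (σ.injective hcon)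
        omega
      rw [h1, Function.update_self, Function.update_of_ne h2]
      simp [f, Function.update_self]; rfl
    · have h1 : σ (⟨2 * s.1, by have := s.2; omega⟩ : Fin (2*m)) ≠ σ ev := fun hcon => by
        have hv : 2 * s.1 = 2 * t.1 := congrArg Fin.val (σ.injective hcon)
        exact hs (Fin.ext (by omega))
      have h2 : σ (⟨2 * s.1 + 1, by have := s.2; omega⟩ : Fin (2*m)) ≠ σ ev := fun hcon => by
        have hv : 2 * s.1 + 1 = 2 * t.1 := congrArg Fin.val (σ.injective hcon)
        omega
      rw [Function.update_of_ne h1, Function.update_of_ne h2, Function.update_of_ne hs]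
  have hupd_od : ∀ v : Idx n, Pprod F m (Function.update e (σ od) v) σ
      = (List.ofFn (Function.update f t (F (Idx.neg (e (σ ev))) v))).prod := by
    intro v
    unfold Pprod
    refine congrArg List.prod (congrArg List.ofFn (funext fun s => ?_))
    by_cases hs : s = t
    · subst hs
      have h1 : σ (⟨2 * s.1, by have := s.2; omega⟩ : Fin (2*m)) ≠ σ od := fun hcon => by
        have hv : 2 * s.1 = 2 * s.1 + 1 := congrArg Fin.val (σ.injective hcon)
        omega
      have h2 : σ (⟨2 * s.1 + 1, by have := s.2; omega⟩ : Fin (2*m)) = σ od := rfl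
      rw [h2, Function.update_self, Function.update_of_ne h1]
      simp [f, Function.update_self]; rfl
    · have h1 : σ (⟨2 * s.1, by have := s.2; omega⟩ : Fin (2*m)) ≠ σ od := fun hcon => by
        have hv : 2 * s.1 = 2 * t.1 + 1 := congrArg Fin.val (σ.injective hcon)
        omega
      have h2 : σ (⟨2 * s.1 + 1, by have := s.2; omega⟩ : Fin (2*m)) ≠ σ od := fun hcon => by
        have hv : 2 * s.1 + 1 = 2 * t.1 + 1 := congrArg Fin.val (σ.injective hcon)
        exact hs (Fin.ext (by omega))
      rw [Function.update_of_ne h1, Function.update_of_ne h2, Function.update_of_ne hs]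
  have hft : f t = F (Idx.neg (e (σ ev))) (e (σ od)) := rfl
  rw [hh]
  simp only [hupd_ev, hupd_od]
  rw [ofFn_update_prod m f t, ofFn_update_prod m f t, ofFn_update_prod m f t,
    ofFn_update_prod m f t, ofFn_update_prod m f t]
  set T := ((List.ofFn f).take t.1).prod
  set D := ((List.ofFn f).drop (t.1+1)).prod
  rw [hft, hg, hrel j1 (Idx.neg j2) (Idx.neg (e (σ ev))) (e (σ od))]
  have c2 : (j1 = e (σ od)) = (e (σ od) = j1) := propext eq_comm
  simp only [Idx.neg_inj', Idx.neg_neg', c2, ite_smul, one_smul, zero_smul,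
    mul_ite, ite_mul, mul_zero, zero_mul, mul_sub, sub_mul, mul_add, add_mul]
  split_ifs <;> abel

/-- the map sending the polyvector `e_{-i₁} ∧ ⋯ ∧ e_{-i_k}` to `Pf F_I`
intertwines the natural action of `o_N` on `Λ^k ℂ^N` with the adjoint action on `U(o_N)`.
Formulated on the generators `g = F_{j₁,-j₂}` (which span `o_N`): the bracket
`[F_{j₁,-j₂}, PfEnum e]` equals the sum over positions `t` of the pfaffian along the
enumeration `e` with the `t`-th entry acted on by `F_{j₁,-j₂}`
(`F_{j₁,-j₂} e_{-i} = δ_{i,j₂} e_{-(-j₁)} - δ_{i,j₁} e_{-(-j₂)}`). -/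
theorem statement6 {A : Type*} [Ring A] [Algebra ℚ A] (n : ℕ)
    (F : Idx n → Idx n → A) (hrel : OrthRel F) (hskew : OrthSkew F)
    (m : ℕ) (e : Fin (2 * m) → Idx n) (j1 j2 : Idx n) :
    F j1 (Idx.neg j2) * PfEnum F m e - PfEnum F m e * F j1 (Idx.neg j2) =
      ∑ t : Fin (2 * m),
        ((if e t = j2 then (1 : ℤ) else 0) • PfEnum F m (Function.update e t (Idx.neg j1))
          - (if e t = j1 then (1 : ℤ) else 0) • PfEnum F m (Function.update e t (Idx.neg j2))) := by
  classical
  set c : ℚ := ((m.factorial : ℚ) * 2 ^ m)⁻¹ with hc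
  have hPf : ∀ e' : Fin (2 * m) → Idx n, PfEnum F m e'
      = c • ∑ σ : Equiv.Perm (Fin (2 * m)), (Equiv.Perm.sign σ : ℤ) • Pprod F m e' σ :=
    fun _ => rfl
  have main : ∑ σ : Equiv.Perm (Fin (2 * m)),
        (Equiv.Perm.sign σ : ℤ) • (F j1 (Idx.neg j2) * Pprod F m e σ
          - Pprod F m e σ * F j1 (Idx.neg j2))
      = ∑ t : Fin (2 * m),
          ((if e t = j2 then (1 : ℤ) else 0) •
              ∑ σ : Equiv.Perm (Fin (2 * m)), (Equiv.Perm.sign σ : ℤ) •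
                Pprod F m (Function.update e t (Idx.neg j1)) σ
            - (if e t = j1 then (1 : ℤ) else 0) •
              ∑ σ : Equiv.Perm (Fin (2 * m)), (Equiv.Perm.sign σ : ℤ) •
                Pprod F m (Function.update e t (Idx.neg j2)) σ) := by
    simp_rw [keyK F hrel m e j1 j2, Finset.smul_sum]
    rw [Finset.sum_comm]
    refine Finset.sum_congr rfl fun t _ => ?_
    rw [← Finset.sum_sub_distrib]
    refine Finset.sum_congr rfl fun σ _ => ?_
    rw [smul_sub, smul_comm, smul_comm ((Equiv.Perm.sign σ : ℤ)) (if e t = j1 then (1 : ℤ) else 0)]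
  calc F j1 (Idx.neg j2) * PfEnum F m e - PfEnum F m e * F j1 (Idx.neg j2)
      = c • ∑ σ : Equiv.Perm (Fin (2 * m)),
          (Equiv.Perm.sign σ : ℤ) • (F j1 (Idx.neg j2) * Pprod F m e σ
            - Pprod F m e σ * F j1 (Idx.neg j2)) := by
        rw [hPf e, mul_smul_comm, smul_mul_assoc, ← smul_sub, Finset.mul_sum,
          Finset.sum_mul, ← Finset.sum_sub_distrib]
        congr 1
        refine Finset.sum_congr rfl fun σ _ => ?_
        rw [mul_smul_comm, smul_mul_assoc, ← smul_sub]
    _ = ∑ t : Fin (2 * m),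
        ((if e t = j2 then (1 : ℤ) else 0) • PfEnum F m (Function.update e t (Idx.neg j1))
          - (if e t = j1 then (1 : ℤ) else 0) • PfEnum F m (Function.update e t (Idx.neg j2))) := by
        rw [main, Finset.smul_sum]
        refine Finset.sum_congr rfl fun t _ => ?_
        rw [hPf (Function.update e t (Idx.neg j1)), hPf (Function.update e t (Idx.neg j2)),
          smul_sub, smul_comm c, smul_comm c]
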